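/- If at every decision time t and state s the DP chooses the 'stay' branch when c^stay_{t,s} ≤ c^switch_{t,s} and otherwise the 'switch' branch, then the trajectory u_{1,s₀,1:T} returned by the DP is feasible (satisfies the minimum up/down-time run-length conditions) and achieves cost exactly c_{1,s₀}. -/

import Mathlib

/-- Minimum run-length feasibility: whenever the schedule switches to a new
state at time `t ∈ {1,…,T}`, it stays there for at least `Tmin (u t)` periods
or until the horizon ends. -/
def UCFeasible (T : ℕ) (Tmin : Bool → ℕ) (u : ℕ → Bool) : Prop :=
  ∀ t, 1 ≤ t → t ≤ T → u t ≠ u (t - 1) →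
    ∀ t', t ≤ t' → t' ≤ min (t + Tmin (u t) - 1) T → u t' = u t

/-- The trajectory extended with state `s` before time `t`. -/
def Wtraj (u : ℕ → Bool → ℕ → Bool) (t : ℕ) (s : Bool) (x : ℕ) : Bool :=
  if x < t then s else u t s x

lemma dp_aux
    (T : ℕ) (L : ℕ → Bool → Bool → ℝ)
    (Tmin : Bool → ℕ) (hTmin1 : ∀ b, 1 ≤ Tmin b)
    (c : ℕ → Bool → ℝ) (u : ℕ → Bool → ℕ → Bool)
    (cstay cswitch : ℕ → Bool → ℝ)
    (hcstay : ∀ t s, cstay t s = L t s s + c (t + 1) s)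
    (hcswitch : ∀ t s, cswitch t s =
      L t s (!s) +
        (∑ t' ∈ Finset.Icc (t + 1) (min (t + Tmin (!s) - 1) T), L t' (!s) (!s)) +
        c (min (t + Tmin (!s)) (T + 1)) (!s))
    (hterm : ∀ s, c (T + 1) s = 0)
    (hrec : ∀ t s, 1 ≤ t → t ≤ T → c t s = min (cstay t s) (cswitch t s))
    (hstay : ∀ t s, 1 ≤ t → t ≤ T → cstay t s ≤ cswitch t s →
      ∀ t', t ≤ t' → t' ≤ T →
        u t s t' = if t' = t then s else u (t + 1) s t')
    (hswitch : ∀ t s, 1 ≤ t → t ≤ T → cswitch t s < cstay t s →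
      ∀ t', t ≤ t' → t' ≤ T →
        u t s t' = if t' ≤ min (t + Tmin (!s) - 1) T then !s
          else u (min (t + Tmin (!s)) (T + 1)) (!s) t') :
    ∀ n t s, T + 1 - t ≤ n → 1 ≤ t → t ≤ T + 1 →
      ((∑ t' ∈ Finset.Icc t T, L t' (Wtraj u t s (t' - 1)) (Wtraj u t s t')) = c t s) ∧
      (∀ t₁, t ≤ t₁ → t₁ ≤ T → Wtraj u t s t₁ ≠ Wtraj u t s (t₁ - 1) →
        ∀ t', t₁ ≤ t' → t' ≤ min (t₁ + Tmin (Wtraj u t s t₁) - 1) T →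
          Wtraj u t s t' = Wtraj u t s t₁) := by
  intro n
  induction n with
  | zero =>
    intro t s hn h1 h2
    have ht : t = T + 1 := by omega
    subst ht
    constructor
    · rw [Finset.Icc_eq_empty (by omega), Finset.sum_empty, hterm]
    · intro t₁ ht1 ht2
      omega
  | succ n ih =>
    intro t s hn h1 h2
    rcases eq_or_lt_of_le h2 with htop | hlt
    · subst htop
      constructor
      · rw [Finset.Icc_eq_empty (by omega), Finset.sum_empty, hterm]
      · intro t₁ ht1 ht2
        omega
    · have hT2 : t ≤ T := by omega
      by_cases hc : cstay t s ≤ cswitch t s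
      · -- stay case
        have hag : ∀ x, x ≤ T → Wtraj u t s x = Wtraj u (t + 1) s x := by
          intro x hx
          unfold Wtraj
          rcases lt_trichotomy x t with h | h | h
          · rw [if_pos h, if_pos (by omega)]
          · subst h
            rw [if_neg (by omega), if_pos (by omega),
              hstay x s h1 hT2 hc x le_rfl hx, if_pos rfl]
          · rw [if_neg (by omega), if_neg (by omega),
              hstay t s h1 hT2 hc x (by omega) hx, if_neg (by omega)]
        have hIH := ih (t + 1) s (by omega) (by omega) (by omega)
        have hwt : Wtraj u t s t = s := by
          unfold Wtraj
          rw [if_neg (by omega), hstay t s h1 hT2 hc t le_rfl hT2, if_pos rfl]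
        have hwtm : Wtraj u t s (t - 1) = s := by
          unfold Wtraj; rw [if_pos (by omega)]
        constructor
        · rw [← Finset.Ico_add_one_right_eq_Icc, Finset.sum_eq_sum_Ico_succ_bot (by omega),
            Finset.Ico_add_one_right_eq_Icc]
          have hsum : (∑ t' ∈ Finset.Icc (t + 1) T,
              L t' (Wtraj u t s (t' - 1)) (Wtraj u t s t')) =
              ∑ t' ∈ Finset.Icc (t + 1) T,
              L t' (Wtraj u (t + 1) s (t' - 1)) (Wtraj u (t + 1) s t') := by
            refine Finset.sum_congr rfl fun x hx => ?_
            rw [Finset.mem_Icc] at hx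
            rw [hag (x - 1) (by omega), hag x (by omega)]
          rw [hsum, hwt, hwtm, hIH.1, hrec t s h1 hT2, min_eq_left hc, hcstay]
        · intro t₁ ht1 ht2 hne t' h3 h4
          rcases eq_or_lt_of_le ht1 with h | h
          · exfalso
            subst h
            rw [hwt, hwtm] at hne
            exact hne rfl
          · have e1 : Wtraj u t s t₁ = Wtraj u (t + 1) s t₁ := hag t₁ ht2
            have e2 : Wtraj u t s (t₁ - 1) = Wtraj u (t + 1) s (t₁ - 1) :=
              hag (t₁ - 1) (by omega)
            have h4' : t' ≤ min (t₁ + Tmin (Wtraj u (t + 1) s t₁) - 1) T := by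
              rwa [← e1]
            have := hIH.2 t₁ (by omega) ht2 (by rw [← e1, ← e2]; exact hne) t' h3 h4'
            rw [hag t' (by omega), e1]
            exact this
      · -- switch case
        push_neg at hc
        have hTb : 1 ≤ Tmin (!s) := hTmin1 (!s)
        set m := min (t + Tmin (!s)) (T + 1) with hm
        have hm1 : t + 1 ≤ m := by omega
        have hm2 : m ≤ T + 1 := by omega
        have hmin' : min (t + Tmin (!s) - 1) T = m - 1 := by omega
        have hb : ∀ x, t ≤ x → x ≤ m - 1 → Wtraj u t s x = !s := by
          intro x hx1 hx2
          unfold Wtraj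
          rw [if_neg (by omega), hswitch t s h1 hT2 hc x hx1 (by omega),
            if_pos (by omega)]
        have hag : ∀ x, m - 1 ≤ x → x ≤ T → Wtraj u t s x = Wtraj u m (!s) x := by
          intro x hx1 hx2
          rcases eq_or_lt_of_le hx1 with h | h
          · rw [hb x (by omega) (by omega)]
            unfold Wtraj
            rw [if_pos (by omega)]
          · unfold Wtraj
            rw [if_neg (by omega), if_neg (by omega),
              hswitch t s h1 hT2 hc x (by omega) hx2, if_neg (by omega)]
        have hIH := ih m (!s) (by omega) (by omega) hm2
        have hwt : Wtraj u t s t = !s := hb t le_rfl (by omega)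
        have hwtm : Wtraj u t s (t - 1) = s := by
          unfold Wtraj; rw [if_pos (by omega)]
        constructor
        · have hsplit : (∑ t' ∈ Finset.Icc t T,
              L t' (Wtraj u t s (t' - 1)) (Wtraj u t s t')) =
              (∑ t' ∈ Finset.Ico t m,
                L t' (Wtraj u t s (t' - 1)) (Wtraj u t s t')) +
              ∑ t' ∈ Finset.Ico m (T + 1),
                L t' (Wtraj u t s (t' - 1)) (Wtraj u t s t') := by
            rw [← Finset.Ico_add_one_right_eq_Icc,
              ← Finset.sum_Ico_consecutive _ (by omega : t ≤ m) (by omega : m ≤ T + 1)]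
          rw [hsplit, Finset.sum_eq_sum_Ico_succ_bot (by omega : t < m), hwt, hwtm]
          have hsum1 : (∑ t' ∈ Finset.Ico (t + 1) m,
              L t' (Wtraj u t s (t' - 1)) (Wtraj u t s t')) =
              ∑ t' ∈ Finset.Ico (t + 1) m, L t' (!s) (!s) := by
            refine Finset.sum_congr rfl fun x hx => ?_
            rw [Finset.mem_Ico] at hx
            rw [hb (x - 1) (by omega) (by omega), hb x (by omega) (by omega)]
          have hsum2 : (∑ t' ∈ Finset.Ico m (T + 1),
              L t' (Wtraj u t s (t' - 1)) (Wtraj u t s t')) =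
              ∑ t' ∈ Finset.Ico m (T + 1),
              L t' (Wtraj u m (!s) (t' - 1)) (Wtraj u m (!s) t') := by
            refine Finset.sum_congr rfl fun x hx => ?_
            rw [Finset.mem_Ico] at hx
            rw [hag (x - 1) (by omega) (by omega), hag x (by omega) (by omega)]
          rw [hsum1, hsum2, Finset.Ico_add_one_right_eq_Icc, hIH.1]
          have hIco : Finset.Ico (t + 1) m = Finset.Icc (t + 1) (m - 1) := by
            rw [← Finset.Ico_add_one_right_eq_Icc]
            congr 1
            omega
          rw [hIco, hrec t s h1 hT2, min_eq_right (le_of_lt hc), hcswitch, hmin', ← hm]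
        · intro t₁ ht1 ht2 hne t' h3 h4
          rcases eq_or_lt_of_le ht1 with h | h
          · subst h
            rw [hwt] at h4 ⊢
            rw [hmin'] at h4
            exact hb t' (by omega) (by omega)
          · by_cases hcase : t₁ ≤ m - 1
            · exfalso
              apply hne
              rw [hb t₁ (by omega) hcase, hb (t₁ - 1) (by omega) (by omega)]
            · push_neg at hcase
              have e1 : Wtraj u t s t₁ = Wtraj u m (!s) t₁ := hag t₁ (by omega) ht2
              have e2 : Wtraj u t s (t₁ - 1) = Wtraj u m (!s) (t₁ - 1) :=
                hag (t₁ - 1) (by omega) (by omega)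
              have h4' : t' ≤ min (t₁ + Tmin (Wtraj u m (!s) t₁) - 1) T := by
                rwa [← e1]
              have := hIH.2 t₁ (by omega) ht2 (by rw [← e1, ← e2]; exact hne) t' h3 h4'
              rw [hag t' (by omega) (by omega), e1]
              exact this

/-- If the DP chooses the 'stay' branch when
`c^stay_{t,s} ≤ c^switch_{t,s}` and the 'switch' branch otherwise, then the
returned trajectory `u_{1,s₀,1:T}` is feasible and its cost is exactly
`c 1 s₀`. -/
theorem dp_trajectory_feasible_and_optimal
    (T : ℕ) (hT : 1 ≤ T) (L : ℕ → Bool → Bool → ℝ)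
    (TU TD : ℕ) (hTU : 1 ≤ TU) (hTD : 1 ≤ TD)
    (Tmin : Bool → ℕ) (hTmin : Tmin true = TU ∧ Tmin false = TD)
    (s₀ : Bool) (c : ℕ → Bool → ℝ) (u : ℕ → Bool → ℕ → Bool)
    (cstay cswitch : ℕ → Bool → ℝ)
    (hcstay : ∀ t s, cstay t s = L t s s + c (t + 1) s)
    (hcswitch : ∀ t s, cswitch t s =
      L t s (!s) +
        (∑ t' ∈ Finset.Icc (t + 1) (min (t + Tmin (!s) - 1) T), L t' (!s) (!s)) +
        c (min (t + Tmin (!s)) (T + 1)) (!s))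
    (hterm : ∀ s, c (T + 1) s = 0)
    (hrec : ∀ t s, 1 ≤ t → t ≤ T → c t s = min (cstay t s) (cswitch t s))
    (hstay : ∀ t s, 1 ≤ t → t ≤ T → cstay t s ≤ cswitch t s →
      ∀ t', t ≤ t' → t' ≤ T →
        u t s t' = if t' = t then s else u (t + 1) s t')
    (hswitch : ∀ t s, 1 ≤ t → t ≤ T → cswitch t s < cstay t s →
      ∀ t', t ≤ t' → t' ≤ T →
        u t s t' = if t' ≤ min (t + Tmin (!s) - 1) T then !s
          else u (min (t + Tmin (!s)) (T + 1)) (!s) t') :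
    let w : ℕ → Bool := fun t => if t = 0 then s₀ else u 1 s₀ t
    UCFeasible T Tmin w ∧
      (∑ t ∈ Finset.Icc 1 T, L t (w (t - 1)) (w t)) = c 1 s₀ := by
  intro w
  have hTmin1 : ∀ b, 1 ≤ Tmin b := by
    intro b
    cases b
    · rw [hTmin.2]; exact hTD
    · rw [hTmin.1]; exact hTU
  have key := dp_aux T L Tmin hTmin1 c u cstay cswitch hcstay hcswitch hterm hrec
    hstay hswitch (T + 1) 1 s₀ (by omega) le_rfl (by omega)
  have hw : ∀ x, w x = Wtraj u 1 s₀ x := by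
    intro x
    show (if x = 0 then s₀ else u 1 s₀ x) = _
    unfold Wtraj
    congr 1
    simp [Nat.lt_one_iff]
  constructor
  · intro t h1 h2 hne t' ha hb
    rw [hw t', hw t]
    rw [hw t, hw (t - 1)] at hne
    rw [hw t] at hb
    exact key.2 t h1 h2 hne t' ha hb
  · rw [← key.1]
    exact Finset.sum_congr rfl fun x _ => by rw [hw (x - 1), hw x]
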